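/- (Proposition 1, distance property) Let p ≥ 1, n ≥ 1, X_1, …, X_n ∈ ℝ^p, A_1, …, A_n ∈ {0,1} with n_0 ≥ 1 and n_1 ≥ 1, and let w ∈ ℝ^n satisfy Σ_{i=1}^n w_i 1{A_i = a} = n_a for a ∈ {0,1} and w_i > 0 for all i. Then for each a ∈ {0,1}, E(F_{n,a,w}, F_n) ≥ 0, and E(F_{n,a,w}, F_n) = 0 if and only if φ_{n,a,w}(t) = φ_n(t) for every t ∈ ℝ^p. -/

import Mathlib

open MeasureTheory Finset

noncomputable section

lemma thresh_integral {M b : ℝ} (hb1 : -M < b) (hb2 : b ≤ M) :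
    ∫ s in Set.Ioc (-M) M, (if b ≤ s then (1:ℝ) else 0) = M - b := by
  have h1 : (fun s : ℝ => if b ≤ s then (1:ℝ) else 0)
      = Set.indicator (Set.Ici b) (fun _ => (1:ℝ)) := by
    funext s; simp [Set.indicator_apply, Set.mem_Ici]
  rw [h1, setIntegral_indicator measurableSet_Ici]
  have h2 : Set.Ioc (-M) M ∩ Set.Ici b = Set.Icc b M := by
    ext s
    simp only [Set.mem_inter_iff, Set.mem_Ioc, Set.mem_Ici, Set.mem_Icc]
    constructor
    · rintro ⟨⟨_, h⟩, h'⟩; exact ⟨h', h⟩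
    · rintro ⟨h', h⟩; exact ⟨⟨lt_of_lt_of_le hb1 h', h⟩, h'⟩
  rw [h2]
  simp [Real.volume_Icc, ENNReal.toReal_ofReal (sub_nonneg.mpr hb2), hb2]

lemma thresh_integrable {M b c : ℝ} :
    IntegrableOn (fun s : ℝ => if b ≤ s then (c:ℝ) else 0) (Set.Ioc (-M) M) := by
  have h1 : (fun s : ℝ => if b ≤ s then (c:ℝ) else 0)
      = Set.indicator (Set.Ici b) (fun _ => (c:ℝ)) := by
    funext s; simp [Set.indicator_apply, Set.mem_Ici]
  rw [h1]
  exact (integrableOn_const measure_Ioc_lt_top.ne).indicator measurableSet_Ici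

lemma oneD_repr {m : ℕ} (y c : Fin m → ℝ) (hc : ∑ i, c i = 0) (M : ℝ)
    (hM : ∀ i, |y i| < M) :
    ∑ i, ∑ j, c i * c j * |y i - y j|
      = -2 * ∫ s in Set.Ioc (-M) M, (∑ i, if y i ≤ s then c i else 0)^2 := by
  have hMi : ∀ i, -M < y i ∧ y i < M := fun i => abs_lt.mp (hM i)
  -- pointwise product formula
  have hprod : ∀ i j : Fin m, ∀ s : ℝ,
      (if y i ≤ s then c i else 0) * (if y j ≤ s then c j else 0)
        = (if max (y i) (y j) ≤ s then c i * c j else 0) := by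
    intro i j s
    by_cases h1 : y i ≤ s <;> by_cases h2 : y j ≤ s <;>
      simp [h1, h2, max_le_iff, *]
  -- integral of each product
  have hint : ∀ i j : Fin m,
      ∫ s in Set.Ioc (-M) M,
        (if y i ≤ s then c i else 0) * (if y j ≤ s then c j else 0)
        = c i * c j * (M - max (y i) (y j)) := by
    intro i j
    simp only [hprod]
    have h3 : (fun s : ℝ => if max (y i) (y j) ≤ s then c i * c j else 0)
        = fun s : ℝ => (c i * c j) * (if max (y i) (y j) ≤ s then (1:ℝ) else 0) := by
      funext s; by_cases h : max (y i) (y j) ≤ s <;> simp [h]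
    rw [h3, integral_const_mul, thresh_integral (lt_max_of_lt_left (hMi i).1)
      (max_le (hMi i).2.le (hMi j).2.le)]
  -- expand the square of the sum inside the integral
  have hsq : ∀ s : ℝ, (∑ i, if y i ≤ s then c i else 0)^2
      = ∑ i, ∑ j, (if y i ≤ s then c i else 0) * (if y j ≤ s then c j else 0) := by
    intro s
    rw [sq, Finset.sum_mul_sum]
  have hintg : ∀ i j : Fin m, IntegrableOn
      (fun s : ℝ => (if y i ≤ s then c i else 0) * (if y j ≤ s then c j else 0))
      (Set.Ioc (-M) M) := by
    intro i j
    have := hprod i j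
    have h3 : (fun s : ℝ => (if y i ≤ s then c i else 0) * (if y j ≤ s then c j else 0))
        = fun s : ℝ => (if max (y i) (y j) ≤ s then c i * c j else 0) := by
      funext s; exact hprod i j s
    rw [h3]; exact thresh_integrable
  -- interchange
  have hswap : ∫ s in Set.Ioc (-M) M, (∑ i, if y i ≤ s then c i else 0)^2
      = ∑ i, ∑ j, c i * c j * (M - max (y i) (y j)) := by
    simp only [hsq]
    rw [integral_finset_sum _ (fun i _ => integrable_finset_sum _ (fun j _ => hintg i j))]
    refine Finset.sum_congr rfl (fun i _ => ?_)
    rw [integral_finset_sum _ (fun j _ => hintg i j)]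
    exact Finset.sum_congr rfl (fun j _ => hint i j)
  rw [hswap]
  -- now pure algebra with sums
  have habs : ∀ i j : Fin m, c i * c j * |y i - y j|
      = 2 * (c i * c j * (max (y i) (y j) - M)) - (c i * y i) * c j - c i * (c j * y j)
        + (2 * M * c i) * c j := by
    intro i j
    rcases le_total (y i) (y j) with h | h
    · rw [abs_of_nonpos (by linarith), max_eq_right h]; ring
    · rw [abs_of_nonneg (by linarith), max_eq_left h]; ring
  have inner_eq : ∀ i : Fin m,
      ∑ j, (2 * (c i * c j * (max (y i) (y j) - M)) - (c i * y i) * c j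
        - c i * (c j * y j) + (2 * M * c i) * c j)
      = (∑ j, 2 * (c i * c j * (max (y i) (y j) - M))) - c i * (∑ j, c j * y j) := by
    intro i
    simp only [Finset.sum_add_distrib, Finset.sum_sub_distrib, ← Finset.mul_sum, hc,
      mul_zero, sub_zero, add_zero]
  calc ∑ i, ∑ j, c i * c j * |y i - y j|
      = ∑ i, ((∑ j, 2 * (c i * c j * (max (y i) (y j) - M))) - c i * (∑ j, c j * y j)) := by
        refine Finset.sum_congr rfl fun i _ => ?_
        rw [← inner_eq i]
        exact Finset.sum_congr rfl fun j _ => habs i j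
    _ = (∑ i, ∑ j, 2 * (c i * c j * (max (y i) (y j) - M)))
          - (∑ i, c i) * (∑ j, c j * y j) := by
        rw [Finset.sum_sub_distrib, ← Finset.sum_mul]
    _ = ∑ i, ∑ j, 2 * (c i * c j * (max (y i) (y j) - M)) := by rw [hc]; ring
    _ = -2 * ∑ i, ∑ j, c i * c j * (M - max (y i) (y j)) := by
        rw [Finset.mul_sum]
        refine Finset.sum_congr rfl fun i _ => ?_
        rw [Finset.mul_sum]
        exact Finset.sum_congr rfl fun j _ => by ring


lemma levels_of_partial {m : ℕ} (y c : Fin m → ℝ)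
    (h : ∀ s : ℝ, ∑ i, (if y i ≤ s then c i else 0) = 0) (r : ℝ) :
    ∑ i, (if y i = r then c i else 0) = 0 := by
  have hlt : ∑ i, (if y i < r then c i else 0) = 0 := by
    set F := Finset.univ.filter (fun i => y i < r) with hF
    by_cases hFne : F.Nonempty
    · have hFim : (F.image y).Nonempty := hFne.image y
      set s₁ := (F.image y).max' hFim with hs₁
      have hs₁lt : s₁ < r := by
        obtain ⟨i, hiF, hiy⟩ := Finset.mem_image.mp ((F.image y).max'_mem hFim)
        rw [show s₁ = y i from hiy ▸ hs₁]
        exact (Finset.mem_filter.mp hiF).2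
      have hiff : ∀ i, (y i < r) ↔ (y i ≤ s₁) := by
        intro i
        constructor
        · intro h'
          exact Finset.le_max' _ _ (Finset.mem_image_of_mem y
            (Finset.mem_filter.mpr ⟨Finset.mem_univ i, h'⟩))
        · intro h'
          exact lt_of_le_of_lt h' hs₁lt
      calc ∑ i, (if y i < r then c i else 0)
          = ∑ i, (if y i ≤ s₁ then c i else 0) :=
            Finset.sum_congr rfl fun i _ => if_congr (hiff i) rfl rfl
        _ = 0 := h s₁
    · have : ∀ i : Fin m, ¬ (y i < r) := by
        intro i hi
        exact hFne ⟨i, Finset.mem_filter.mpr ⟨Finset.mem_univ i, hi⟩⟩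
      simp [this]
  have hsplit : ∀ i : Fin m, (if y i = r then c i else 0)
      = (if y i ≤ r then c i else 0) - (if y i < r then c i else 0) := by
    intro i
    rcases lt_trichotomy (y i) r with h' | h' | h'
    · simp [h', ne_of_lt h', le_of_lt h']
    · simp [h', le_of_eq h', lt_irrefl]
    · simp [not_le.mpr h', ne_of_gt h', not_lt.mpr (le_of_lt h')]
  calc ∑ i, (if y i = r then c i else 0)
      = ∑ i, ((if y i ≤ r then c i else 0) - (if y i < r then c i else 0)) :=
        Finset.sum_congr rfl fun i _ => hsplit i
    _ = (∑ i, (if y i ≤ r then c i else 0)) - ∑ i, (if y i < r then c i else 0) :=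
        Finset.sum_sub_distrib _ _
    _ = 0 := by rw [h r, hlt, sub_zero]

lemma funsum_of_levels {m : ℕ} (y : Fin m → ℝ) {β : Type*} [CommRing β]
    (d : Fin m → β) (h : ∀ r : ℝ, ∑ i, (if y i = r then d i else 0) = 0)
    (f : ℝ → β) : ∑ i, d i * f (y i) = 0 := by
  have := Finset.sum_fiberwise_of_maps_to
    (s := (Finset.univ : Finset (Fin m))) (g := y) (t := Finset.univ.image y)
    (fun i _ => Finset.mem_image_of_mem y (Finset.mem_univ i))
    (fun i => d i * f (y i))
  rw [← this]
  refine Finset.sum_eq_zero fun r _ => ?_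
  have hinner : ∑ i ∈ Finset.univ.filter (fun i => y i = r), d i * f (y i)
      = (∑ i ∈ Finset.univ.filter (fun i => y i = r), d i) * f r := by
    rw [Finset.sum_mul]
    refine Finset.sum_congr rfl fun i hi => ?_
    rw [(Finset.mem_filter.mp hi).2]
  rw [hinner, Finset.sum_filter, h r, zero_mul]


-- main 1-D lemma
lemma oneD_main {m : ℕ} (y c : Fin m → ℝ) (hc : ∑ i, c i = 0) :
    (∑ i, ∑ j, c i * c j * |y i - y j| ≤ 0) ∧
    (∑ i, ∑ j, c i * c j * |y i - y j| = 0 ↔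
      ∀ r : ℝ, ∑ i, (if y i = r then c i else 0) = 0) := by
  set M : ℝ := 1 + ∑ i, |y i| with hMdef
  have hM : ∀ i, |y i| < M := by
    intro i
    have h1 : |y i| ≤ ∑ k, |y k| :=
      Finset.single_le_sum (fun k _ => abs_nonneg (y k)) (Finset.mem_univ i)
    linarith
  have hrepr := oneD_repr y c hc M hM
  set P : ℝ → ℝ := fun s => ∑ i, if y i ≤ s then c i else 0 with hPdef
  have hPnn : 0 ≤ ∫ s in Set.Ioc (-M) M, (P s)^2 :=
    setIntegral_nonneg measurableSet_Ioc (fun s _ => sq_nonneg _)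
  constructor
  · rw [hrepr]; linarith
  constructor
  · -- energy zero implies all level sums vanish
    intro h0
    have hI : ∫ s in Set.Ioc (-M) M, (P s)^2 = 0 := by
      rw [hrepr] at h0; linarith
    -- integrability of P^2 on the interval
    have hintP2 : IntegrableOn (fun s => (P s)^2) (Set.Ioc (-M) M) := by
      have hexp : (fun s => (P s)^2)
          = fun s => ∑ i, ∑ j, (if y i ≤ s then c i else 0) * (if y j ≤ s then c j else 0) := by
        funext s; rw [sq, Finset.sum_mul_sum]
      rw [hexp]
      refine integrable_finset_sum _ (fun i _ => integrable_finset_sum _ (fun j _ => ?_))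
      have h3 : (fun s : ℝ => (if y i ≤ s then c i else 0) * (if y j ≤ s then c j else 0))
          = fun s : ℝ => (if max (y i) (y j) ≤ s then c i * c j else 0) := by
        funext s
        by_cases h1 : y i ≤ s <;> by_cases h2 : y j ≤ s <;>
          simp [h1, h2, max_le_iff, *]
      rw [h3]; exact thresh_integrable
    have hae : (fun s => (P s)^2) =ᵐ[volume.restrict (Set.Ioc (-M) M)] 0 :=
      (integral_eq_zero_iff_of_nonneg (fun s => sq_nonneg _) hintP2).mp hI
    -- measurability of P
    have hPmeas : Measurable P := by
      refine Finset.measurable_sum _ (fun i _ => ?_)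
      have : (fun s : ℝ => if y i ≤ s then c i else 0)
          = (Set.Ici (y i)).indicator (fun _ => c i) := by
        funext s; simp [Set.indicator_apply, Set.mem_Ici]
      rw [this]
      exact measurable_const.indicator measurableSet_Ici
    have hnull : volume ({s : ℝ | P s ≠ 0} ∩ Set.Ioc (-M) M) = 0 := by
      have h1 : {s : ℝ | ¬ ((fun s => (P s)^2) s = (0 : ℝ → ℝ) s)} = {s : ℝ | P s ≠ 0} := by
        ext s; simp [pow_eq_zero_iff]
      have h2 := ae_iff.mp hae
      rw [h1] at h2
      have hms : MeasurableSet {s : ℝ | P s ≠ 0} := hPmeas (measurableSet_singleton 0).compl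
      rwa [Measure.restrict_apply hms] at h2
    -- pointwise vanishing of partial sums
    have hpartial : ∀ s : ℝ, P s = 0 := by
      intro s
      rcases le_or_gt M s with hs | hs
      · -- all points included
        have hall : ∀ i : Fin m, y i ≤ s := fun i =>
          le_trans (le_of_lt (abs_lt.mp (hM i)).2) hs
        have : P s = ∑ i, c i := Finset.sum_congr rfl fun i _ => if_pos (hall i)
        rw [this, hc]
      rcases lt_or_ge s (-M) with hs' | hs'
      · have : ∀ i : Fin m, ¬ (y i ≤ s) := by
          intro i hi
          have := (abs_lt.mp (hM i)).1
          linarith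
        simp [hPdef, this]
      · -- -M ≤ s < M
        by_contra hPs
        -- find δ > 0 such that P is constant on (s, s+δ) and the interval is inside Ioc
        obtain ⟨δ, hδpos, hδprop⟩ : ∃ δ : ℝ, 0 < δ ∧ ∀ σ ∈ Set.Ioo s (s + δ),
            P σ = P s ∧ σ ∈ Set.Ioc (-M) M := by
          classical
          set T := Finset.univ.filter (fun i => s < y i) with hT
          by_cases hTne : T.Nonempty
          · set v := ((T.image y).min' (hTne.image y)) with hv
            have hvs : s < v := by
              obtain ⟨i, hiT, hiy⟩ := Finset.mem_image.mp ((T.image y).min'_mem (hTne.image y))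
              rw [show v = y i from hiy ▸ hv]
              exact (Finset.mem_filter.mp hiT).2
            refine ⟨min (v - s) (M - s), lt_min (by linarith) (by linarith), ?_⟩
            intro σ hσ
            obtain ⟨hσ1, hσ2⟩ := hσ
            have hσM : σ ≤ M := by
              have := lt_of_lt_of_le hσ2 (by linarith [min_le_right (v - s) (M - s)] : s + min (v - s) (M - s) ≤ M)
              linarith
            have hσv : σ < v := by
              have := min_le_left (v - s) (M - s)
              linarith
            constructor
            · refine Finset.sum_congr rfl fun i _ => ?_
              by_cases hi : y i ≤ s
              · rw [if_pos hi, if_pos (le_trans hi hσ1.le)]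
              · have hiT : i ∈ T := Finset.mem_filter.mpr ⟨Finset.mem_univ i, not_le.mp hi⟩
                have : v ≤ y i := Finset.min'_le _ _ (Finset.mem_image_of_mem y hiT)
                rw [if_neg hi, if_neg (by linarith : ¬ (y i ≤ σ))]
            · exact ⟨lt_of_le_of_lt hs' hσ1, hσM⟩
          · refine ⟨M - s, by linarith, ?_⟩
            intro σ hσ
            obtain ⟨hσ1, hσ2⟩ := hσ
            have hall : ∀ i : Fin m, y i ≤ s := by
              intro i
              by_contra hi
              exact hTne ⟨i, Finset.mem_filter.mpr ⟨Finset.mem_univ i, not_le.mp hi⟩⟩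
            constructor
            · refine Finset.sum_congr rfl fun i _ => ?_
              rw [if_pos (hall i), if_pos (le_trans (hall i) hσ1.le)]
            · exact ⟨lt_of_le_of_lt hs' hσ1, by linarith⟩
        have hsub : Set.Ioo s (s + δ) ⊆ {σ : ℝ | P σ ≠ 0} ∩ Set.Ioc (-M) M := by
          intro σ hσ
          obtain ⟨h1, h2⟩ := hδprop σ hσ
          exact ⟨by rw [Set.mem_setOf_eq, h1]; exact hPs, h2⟩
        have : volume (Set.Ioo s (s + δ)) ≤ volume ({σ : ℝ | P σ ≠ 0} ∩ Set.Ioc (-M) M) := measure_mono hsub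
        rw [hnull] at this
        have hIoo : volume (Set.Ioo s (s + δ)) = ENNReal.ofReal δ := by
          rw [Real.volume_Ioo]; ring_nf
        rw [hIoo] at this
        simp only [nonpos_iff_eq_zero, ENNReal.ofReal_eq_zero] at this
        linarith
    exact levels_of_partial y c hpartial
  · -- level sums vanish implies energy zero
    intro hlev
    refine Finset.sum_eq_zero fun i _ => ?_
    have : ∑ j, c j * |y i - y j| = 0 :=
      funsum_of_levels y c hlev (fun t => |y i - t|)
    calc ∑ j, c i * c j * |y i - y j| = c i * ∑ j, c j * |y i - y j| := by
          rw [Finset.mul_sum]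
          exact Finset.sum_congr rfl fun j _ => by ring
      _ = 0 := by rw [this, mul_zero]


local notation "Vp" p => EuclideanSpace ℝ (Fin p)

lemma gauss_integrable {p : ℕ} (z : Vp p) :
    Integrable (fun u : Vp p => |(inner ℝ u z : ℝ)| * Real.exp (-‖u‖^2)) := by
  have hcont : Continuous fun u : Vp p => |(inner ℝ u z : ℝ)| * Real.exp (-‖u‖^2) :=
    ((continuous_id.inner continuous_const).abs).mul
      (Real.continuous_exp.comp ((continuous_norm.pow 2).neg))
  have hdom : Integrable (fun u : Vp p => ‖z‖ * Real.exp (-(1/2)*‖u‖^2)) := by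
    refine Integrable.const_mul ?_ _
    have h := (GaussianFourier.integrable_cexp_neg_mul_sq_norm_add
      (V := Vp p) (b := (1/2 : ℂ)) (by norm_num) 0 (0 : Vp p)).norm
    have heq : (fun v : Vp p => ‖Complex.exp (-(1/2:ℂ) * (‖v‖:ℂ)^2 + 0 * (inner ℝ (0 : Vp p) v : ℝ))‖)
        = fun v : Vp p => Real.exp (-(1/2)*‖v‖^2) := by
      funext v
      rw [Complex.norm_exp]
      congr 1
      have h4 : (-(1/2:ℂ) * (‖v‖:ℂ)^2 + 0 * ((inner ℝ (0:Vp p) v : ℝ):ℂ))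
          = ((-(1/2)*‖v‖^2 : ℝ) : ℂ) := by push_cast; ring
      rw [h4, Complex.ofReal_re]
    rwa [heq] at h
  refine hdom.mono' hcont.aestronglyMeasurable (Filter.Eventually.of_forall fun u => ?_)
  have h1 : |(inner ℝ u z : ℝ)| ≤ ‖u‖ * ‖z‖ := abs_real_inner_le_norm u z
  have h2 : ‖u‖ ≤ Real.exp ((1/2)*‖u‖^2) := by
    have h3 := Real.add_one_le_exp ((1/2)*‖u‖^2)
    nlinarith [sq_nonneg (‖u‖ - 1), norm_nonneg u]
  have hexp : (0:ℝ) < Real.exp (-‖u‖^2) := Real.exp_pos _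
  rw [Real.norm_eq_abs, abs_of_nonneg (by positivity)]
  calc |(inner ℝ u z : ℝ)| * Real.exp (-‖u‖^2) ≤ (Real.exp ((1/2)*‖u‖^2) * ‖z‖) * Real.exp (-‖u‖^2) :=
        mul_le_mul_of_nonneg_right
          (le_trans h1 (mul_le_mul_of_nonneg_right h2 (norm_nonneg z))) hexp.le
    _ = ‖z‖ * Real.exp (-(1/2)*‖u‖^2) := by
        rw [mul_comm (Real.exp _) ‖z‖, mul_assoc, ← Real.exp_add]
        congr 2
        ring

lemma gauss_inner_formula {p : ℕ} (hp : 1 ≤ p) : ∃ C : ℝ, 0 < C ∧ ∀ z : Vp p,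
    (∫ u : Vp p, |(inner ℝ u z : ℝ)| * Real.exp (-‖u‖^2)) = C * ‖z‖ := by
  classical
  set e₁ : Vp p := EuclideanSpace.single ⟨0, hp⟩ (1:ℝ) with he₁
  have hne₁ : ‖e₁‖ = 1 := by rw [he₁, EuclideanSpace.norm_single, norm_one]
  set C : ℝ := ∫ u : Vp p, |(inner ℝ u e₁ : ℝ)| * Real.exp (-‖u‖^2) with hC
  have hCpos : 0 < C := by
    rw [hC]
    refine (integral_pos_iff_support_of_nonneg (fun u => by positivity)
      (gauss_integrable e₁)).mpr ?_
    have hU : IsOpen {u : Vp p | 0 < |(inner ℝ u e₁ : ℝ)|} :=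
      isOpen_lt continuous_const ((continuous_id.inner continuous_const).abs)
    have hUsub : {u : Vp p | 0 < |(inner ℝ u e₁ : ℝ)|} ⊆
        Function.support fun u => |(inner ℝ u e₁ : ℝ)| * Real.exp (-‖u‖^2) := by
      intro u hu
      have : (0:ℝ) < |(inner ℝ u e₁ : ℝ)| * Real.exp (-‖u‖^2) :=
        mul_pos hu (Real.exp_pos _)
      exact ne_of_gt this
    have hmem : e₁ ∈ {u : Vp p | 0 < |(inner ℝ u e₁ : ℝ)|} := by
      have : (inner ℝ e₁ e₁ : ℝ) = 1 := by
        rw [real_inner_self_eq_norm_sq, hne₁]; norm_num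
      rw [Set.mem_setOf_eq, this]
      norm_num
    calc (0 : ENNReal) < volume {u : Vp p | 0 < |(inner ℝ u e₁ : ℝ)|} :=
          hU.measure_pos volume ⟨e₁, hmem⟩
      _ ≤ _ := measure_mono hUsub
  refine ⟨C, hCpos, fun z => ?_⟩
  rcases eq_or_ne z 0 with rfl | hz
  · simp [inner_zero_right]
  · set v : Vp p := ‖z‖⁻¹ • z with hv
    have hnv : ‖v‖ = 1 := norm_smul_inv_norm hz
    set e : (Vp p) ≃ₗᵢ[ℝ] (Vp p) := Submodule.reflection (ℝ ∙ (e₁ - v))ᗮ with he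
    have hee₁ : e e₁ = v := Submodule.reflection_sub (by rw [hne₁, hnv])
    have hmp : MeasurePreserving e volume volume := e.measurePreserving
    have hintegral : (∫ u : Vp p, |(inner ℝ u z : ℝ)| * Real.exp (-‖u‖^2))
        = ∫ u : Vp p, |(inner ℝ (e u) z : ℝ)| * Real.exp (-‖e u‖^2) :=
      (hmp.integral_comp e.toHomeomorph.measurableEmbedding
        (fun u => |(inner ℝ u z : ℝ)| * Real.exp (-‖u‖^2))).symm
    have hzv : ‖z‖ • v = z := by
      rw [hv, smul_smul, mul_inv_cancel₀ (norm_ne_zero_iff.mpr hz), one_smul]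
    have hpt : ∀ u : Vp p, |(inner ℝ (e u) z : ℝ)| * Real.exp (-‖e u‖^2)
        = ‖z‖ * (|(inner ℝ u e₁ : ℝ)| * Real.exp (-‖u‖^2)) := by
      intro u
      have h1 : (inner ℝ (e u) z : ℝ) = ‖z‖ * (inner ℝ u e₁ : ℝ) := by
        have h1a : (inner ℝ (e u) z : ℝ) = (inner ℝ (e u) (‖z‖ • v) : ℝ) := by rw [hzv]
        rw [h1a, real_inner_smul_right, ← hee₁, e.inner_map_map]
      rw [h1, abs_mul, abs_of_nonneg (norm_nonneg z), e.norm_map]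
      ring
    rw [hintegral]
    simp_rw [hpt]
    rw [MeasureTheory.integral_const_mul, hC]
    ring


lemma fiber_decomp {m : ℕ} (y : Fin m → ℝ) {β : Type*} [CommRing β]
    (d : Fin m → β) (f : ℝ → β) :
    ∑ i, d i * f (y i)
      = ∑ r ∈ Finset.univ.image y, (∑ i, if y i = r then d i else 0) * f r := by
  have := Finset.sum_fiberwise_of_maps_to
    (s := (Finset.univ : Finset (Fin m))) (g := y) (t := Finset.univ.image y)
    (fun i _ => Finset.mem_image_of_mem y (Finset.mem_univ i))
    (fun i => d i * f (y i))
  rw [← this]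
  refine Finset.sum_congr rfl fun r _ => ?_
  rw [← Finset.sum_filter]
  rw [Finset.sum_mul]
  refine Finset.sum_congr rfl fun i hi => ?_
  rw [(Finset.mem_filter.mp hi).2]

/-- The additive character `s ↦ exp(I s r)` as a monoid hom on `Multiplicative ℝ`. -/
def expChar (r : ℝ) : Multiplicative ℝ →* ℂ where
  toFun := fun s => Complex.exp (Complex.I * ((Multiplicative.toAdd s * r : ℝ) : ℂ))
  map_one' := by simp
  map_mul' := by
    intro s t
    show Complex.exp (Complex.I * ((Multiplicative.toAdd (s * t) * r : ℝ) : ℂ))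
      = Complex.exp (Complex.I * ((Multiplicative.toAdd s * r : ℝ) : ℂ))
        * Complex.exp (Complex.I * ((Multiplicative.toAdd t * r : ℝ) : ℂ))
    rw [← Complex.exp_add]
    congr 1
    rw [show Multiplicative.toAdd (s * t)
      = Multiplicative.toAdd s + Multiplicative.toAdd t from rfl]
    push_cast
    ring

lemma expChar_injective : Function.Injective expChar := by
  intro r r' h
  by_contra hne
  have hd : r - r' ≠ 0 := sub_ne_zero.mpr hne
  have := DFunLike.congr_fun h (Multiplicative.ofAdd (Real.pi / (r - r')))
  simp only [expChar, MonoidHom.coe_mk, OneHom.coe_mk, toAdd_ofAdd] at this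
  have h2 : Complex.exp (Complex.I * ((Real.pi / (r - r') * r : ℝ) : ℂ))
      / Complex.exp (Complex.I * ((Real.pi / (r - r') * r' : ℝ) : ℂ)) = 1 := by
    rw [this, div_self (Complex.exp_ne_zero _)]
  rw [← Complex.exp_sub] at h2
  have h4 : (Real.pi / (r - r') * r - Real.pi / (r - r') * r' : ℝ) = Real.pi := by
    field_simp
  have h3 : Complex.I * ((Real.pi / (r - r') * r : ℝ) : ℂ)
      - Complex.I * ((Real.pi / (r - r') * r' : ℝ) : ℂ) = Real.pi * Complex.I := by
    rw [show ((Real.pi : ℝ) : ℂ) = ((Real.pi / (r - r') * r - Real.pi / (r - r') * r' : ℝ) : ℂ)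
      from by rw [h4]]
    push_cast
    ring
  rw [h3, Complex.exp_pi_mul_I] at h2
  norm_num at h2

lemma charsum_levels {m : ℕ} (y : Fin m → ℝ) (d : Fin m → ℂ)
    (h : ∀ s : ℝ, ∑ i, d i * Complex.exp (Complex.I * ((s * y i : ℝ) : ℂ)) = 0) (r : ℝ) :
    ∑ i, (if y i = r then d i else 0) = 0 := by
  classical
  set T := Finset.univ.image y with hT
  by_cases hr : r ∈ T
  · -- linear independence of characters
    have hli : LinearIndependent ℂ (fun t : {x // x ∈ T} => (expChar t.1 : Multiplicative ℝ → ℂ)) := by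
      have h1 := linearIndependent_monoidHom (Multiplicative ℝ) ℂ
      exact h1.comp (fun t : {x // x ∈ T} => expChar t.1)
        (fun a b hab => Subtype.ext (expChar_injective hab))
    have hzero : ∑ t : {x // x ∈ T}, (∑ i, if y i = t.1 then d i else 0)
        • (expChar t.1 : Multiplicative ℝ → ℂ) = 0 := by
      funext s
      simp only [Finset.sum_apply, Pi.smul_apply, smul_eq_mul, Pi.zero_apply]
      rw [Finset.sum_coe_sort T
        (fun t => (∑ i, if y i = t then d i else 0) * expChar t s)]
      have := h (Multiplicative.toAdd s)
      rw [fiber_decomp y d (fun t => Complex.exp (Complex.I * ((Multiplicative.toAdd s * t : ℝ) : ℂ)))] at this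
      exact this
    have := Fintype.linearIndependent_iff.mp hli
      (fun t => ∑ i, if y i = t.1 then d i else 0) hzero ⟨r, hr⟩
    exact this
  · refine Finset.sum_eq_zero fun i _ => ?_
    rw [if_neg]
    intro hy
    exact hr (hy ▸ Finset.mem_image_of_mem y (Finset.mem_univ i))


lemma energy_core {p n : ℕ} (hp : 1 ≤ p) (X : Fin n → EuclideanSpace ℝ (Fin p))
    (c : Fin n → ℝ) (hc : ∑ i, c i = 0) :
    (0 ≤ -∑ i, ∑ j, c i * c j * ‖X i - X j‖) ∧
    ((∑ i, ∑ j, c i * c j * ‖X i - X j‖ = 0) ↔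
      ∀ t : EuclideanSpace ℝ (Fin p),
        ∑ i, (c i : ℂ) * Complex.exp (Complex.I * ((inner ℝ t (X i) : ℝ) : ℂ)) = 0) := by
  classical
  obtain ⟨C, hCpos, hform⟩ := gauss_inner_formula (p := p) hp
  set q : EuclideanSpace ℝ (Fin p) → ℝ :=
    fun u => ∑ i, ∑ j, c i * c j * |(inner ℝ u (X i) : ℝ) - (inner ℝ u (X j) : ℝ)| with hq
  have hq_le : ∀ u, q u ≤ 0 := fun u =>
    (oneD_main (fun i => (inner ℝ u (X i) : ℝ)) c hc).1
  have hq_iff : ∀ u, (q u = 0 ↔ ∀ r : ℝ,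
      ∑ i, (if (inner ℝ u (X i) : ℝ) = r then c i else 0) = 0) := fun u =>
    (oneD_main (fun i => (inner ℝ u (X i) : ℝ)) c hc).2
  -- rewrite each |⟪u,Xi⟫ - ⟪u,Xj⟫| as |⟪u, Xi - Xj⟫|
  have hinner : ∀ u : EuclideanSpace ℝ (Fin p), ∀ i j,
      (inner ℝ u (X i) : ℝ) - (inner ℝ u (X j) : ℝ) = (inner ℝ u (X i - X j) : ℝ) :=
    fun u i j => (inner_sub_right u (X i) (X j)).symm
  -- integrability of each term
  have hterm_int : ∀ i j : Fin n, Integrable (fun u : EuclideanSpace ℝ (Fin p) =>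
      c i * c j * (|(inner ℝ u (X i - X j) : ℝ)| * Real.exp (-‖u‖^2))) :=
    fun i j => (gauss_integrable (X i - X j)).const_mul _
  -- the pointwise double-sum identity
  have hptsum : ∀ u : EuclideanSpace ℝ (Fin p),
      q u * Real.exp (-‖u‖^2) = ∑ i, ∑ j,
        c i * c j * (|(inner ℝ u (X i - X j) : ℝ)| * Real.exp (-‖u‖^2)) := by
    intro u
    rw [hq, Finset.sum_mul]
    refine Finset.sum_congr rfl fun i _ => ?_
    rw [Finset.sum_mul]
    refine Finset.sum_congr rfl fun j _ => ?_
    rw [hinner u i j]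
    ring
  -- integrability of q * exp
  have hq_int : Integrable (fun u : EuclideanSpace ℝ (Fin p) => q u * Real.exp (-‖u‖^2)) := by
    have : (fun u : EuclideanSpace ℝ (Fin p) => q u * Real.exp (-‖u‖^2))
        = fun u => ∑ i, ∑ j, c i * c j * (|(inner ℝ u (X i - X j) : ℝ)| * Real.exp (-‖u‖^2)) := by
      funext u; exact hptsum u
    rw [this]
    exact integrable_finset_sum _ (fun i _ => integrable_finset_sum _ (fun j _ => hterm_int i j))
  -- the representation
  have hrepr : ∑ i, ∑ j, c i * c j * ‖X i - X j‖
      = C⁻¹ * ∫ u : EuclideanSpace ℝ (Fin p), q u * Real.exp (-‖u‖^2) := by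
    have hint_eq : ∫ u : EuclideanSpace ℝ (Fin p), q u * Real.exp (-‖u‖^2)
        = ∑ i, ∑ j, c i * c j * (C * ‖X i - X j‖) := by
      calc ∫ u : EuclideanSpace ℝ (Fin p), q u * Real.exp (-‖u‖^2)
          = ∫ u : EuclideanSpace ℝ (Fin p), ∑ i, ∑ j,
              c i * c j * (|(inner ℝ u (X i - X j) : ℝ)| * Real.exp (-‖u‖^2)) := by
            congr 1; funext u; exact hptsum u
        _ = ∑ i, ∑ j, ∫ u : EuclideanSpace ℝ (Fin p),
              c i * c j * (|(inner ℝ u (X i - X j) : ℝ)| * Real.exp (-‖u‖^2)) := by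
            rw [integral_finset_sum _ (fun i _ =>
              integrable_finset_sum _ (fun j _ => hterm_int i j))]
            exact Finset.sum_congr rfl fun i _ =>
              integral_finset_sum _ (fun j _ => hterm_int i j)
        _ = ∑ i, ∑ j, c i * c j * (C * ‖X i - X j‖) := by
            refine Finset.sum_congr rfl fun i _ => Finset.sum_congr rfl fun j _ => ?_
            rw [MeasureTheory.integral_const_mul, hform (X i - X j)]
    rw [hint_eq]
    rw [Finset.mul_sum]
    refine Finset.sum_congr rfl fun i _ => ?_
    rw [Finset.mul_sum]
    refine Finset.sum_congr rfl fun j _ => ?_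
    field_simp
  have hint_nonpos : ∫ u : EuclideanSpace ℝ (Fin p), q u * Real.exp (-‖u‖^2) ≤ 0 :=
    integral_nonpos fun u => mul_nonpos_of_nonpos_of_nonneg (hq_le u) (Real.exp_pos _).le
  constructor
  · rw [hrepr]
    have := inv_nonneg.mpr hCpos.le
    nlinarith
  constructor
  · -- zero energy implies characteristic functions agree
    intro h0 t
    have hI0 : ∫ u : EuclideanSpace ℝ (Fin p), q u * Real.exp (-‖u‖^2) = 0 := by
      rw [hrepr] at h0
      rcases mul_eq_zero.mp h0 with h | h
      · exact absurd h (by positivity)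
      · exact h
    -- continuity of q
    have hq_cont : Continuous q := by
      refine continuous_finset_sum _ (fun i _ => continuous_finset_sum _ (fun j _ => ?_))
      exact continuous_const.mul
        (((continuous_id.inner continuous_const).sub
          (continuous_id.inner continuous_const)).abs)
    have hg_cont : Continuous (fun u : EuclideanSpace ℝ (Fin p) => -(q u * Real.exp (-‖u‖^2))) :=
      (hq_cont.mul (Real.continuous_exp.comp ((continuous_norm.pow 2).neg))).neg
    have hgint : Integrable (fun u : EuclideanSpace ℝ (Fin p) => -(q u * Real.exp (-‖u‖^2))) := by
      have heq5 : (fun u : EuclideanSpace ℝ (Fin p) => -(q u * Real.exp (-‖u‖^2)))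
          = fun u => (-1 : ℝ) * (q u * Real.exp (-‖u‖^2)) := by funext u; ring
      rw [heq5]
      exact hq_int.const_mul _
    have hg_ae : (fun u : EuclideanSpace ℝ (Fin p) => -(q u * Real.exp (-‖u‖^2)))
        =ᵐ[volume] 0 := by
      refine (integral_eq_zero_iff_of_nonneg ?_ hgint).mp ?_
      · intro u
        simp only [Pi.zero_apply, neg_nonneg]
        exact mul_nonpos_of_nonpos_of_nonneg (hq_le u) (Real.exp_pos _).le
      · rw [integral_neg, hI0, neg_zero]
    have hg_eq : (fun u : EuclideanSpace ℝ (Fin p) => -(q u * Real.exp (-‖u‖^2))) = 0 :=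
      (Continuous.ae_eq_iff_eq volume hg_cont continuous_const).mp hg_ae
    have hq_zero : ∀ u, q u = 0 := by
      intro u
      have := congrFun hg_eq u
      simp only [Pi.zero_apply, neg_eq_zero] at this
      rcases mul_eq_zero.mp this with h | h
      · exact h
      · exact absurd h (Real.exp_ne_zero _)
    -- now use the level sums at direction t
    have hlev := (hq_iff t).mp (hq_zero t)
    have hlevC : ∀ r : ℝ, ∑ i, (if (inner ℝ t (X i) : ℝ) = r then (c i : ℂ) else 0) = 0 := by
      intro r
      have := hlev r
      have hcast : ((∑ i, if (inner ℝ t (X i) : ℝ) = r then c i else 0 : ℝ) : ℂ)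
          = ∑ i, (if (inner ℝ t (X i) : ℝ) = r then (c i : ℂ) else 0) := by
        push_cast [apply_ite (fun x : ℝ => (x : ℂ))]
        rfl
      rw [this] at hcast
      rw [← hcast]
      norm_num
    exact funsum_of_levels (fun i => (inner ℝ t (X i) : ℝ)) (fun i => (c i : ℂ)) hlevC
      (fun r => Complex.exp (Complex.I * (r : ℂ)))
  · -- characteristic functions agree implies zero energy
    intro hchar
    have hq_zero : ∀ u, q u = 0 := by
      intro u
      refine (hq_iff u).mpr ?_
      intro r
      have hlevC : ∑ i, (if (inner ℝ u (X i) : ℝ) = r then (c i : ℂ) else 0) = 0 := by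
        refine charsum_levels (fun i => (inner ℝ u (X i) : ℝ)) (fun i => (c i : ℂ)) ?_ r
        intro s
        have := hchar (s • u)
        have hip : ∀ i, (inner ℝ (s • u) (X i) : ℝ) = s * (inner ℝ u (X i) : ℝ) :=
          fun i => real_inner_smul_left u (X i) s
        calc ∑ i, (c i : ℂ) * Complex.exp (Complex.I * ((s * (inner ℝ u (X i) : ℝ) : ℝ) : ℂ))
            = ∑ i, (c i : ℂ) * Complex.exp (Complex.I * ((inner ℝ (s • u) (X i) : ℝ) : ℂ)) := by
              refine Finset.sum_congr rfl fun i _ => ?_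
              rw [hip i]
          _ = 0 := this
      have : ((∑ i, if (inner ℝ u (X i) : ℝ) = r then c i else 0 : ℝ) : ℂ)
          = ∑ i, (if (inner ℝ u (X i) : ℝ) = r then (c i : ℂ) else 0) := by
        push_cast [apply_ite (fun x : ℝ => (x : ℂ))]
        rfl
      rw [hlevC] at this
      exact_mod_cast this
    rw [hrepr]
    have : ∫ u : EuclideanSpace ℝ (Fin p), q u * Real.exp (-‖u‖^2) = 0 := by
      have : (fun u : EuclideanSpace ℝ (Fin p) => q u * Real.exp (-‖u‖^2)) = 0 := by
        funext u; rw [hq_zero u, zero_mul]; rfl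
      rw [this]
      simp
    rw [this, mul_zero]


/-- Number of sample points in treatment group `a`. -/
def groupCard {n : ℕ} (A : Fin n → Bool) (a : Bool) : ℕ :=
  (Finset.univ.filter fun i => A i = a).card

/-- Weighted energy distance between the `w`-weighted group `a` and the pooled sample. -/
def energyDist {p n : ℕ} (X : Fin n → EuclideanSpace ℝ (Fin p)) (A : Fin n → Bool)
    (w : Fin n → ℝ) (a : Bool) : ℝ :=
  (2 / ((groupCard A a : ℝ) * n)) *
      ∑ i, ∑ j, (if A i = a then w i else 0) * ‖X i - X j‖
    - (1 / (groupCard A a : ℝ) ^ 2) *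
      ∑ i, ∑ j, (if A i = a ∧ A j = a then w i * w j else 0) * ‖X i - X j‖
    - (1 / (n : ℝ) ^ 2) * ∑ i, ∑ j, ‖X i - X j‖

/-- Weighted empirical characteristic function of group `a`. -/
def wECHF {p n : ℕ} (X : Fin n → EuclideanSpace ℝ (Fin p)) (A : Fin n → Bool)
    (w : Fin n → ℝ) (a : Bool) (t : EuclideanSpace ℝ (Fin p)) : ℂ :=
  (1 / (groupCard A a : ℂ)) *
    ∑ i, (if A i = a then (w i : ℂ) else 0) *
      Complex.exp (Complex.I * ((inner ℝ t (X i) : ℝ) : ℂ))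

/-- Pooled empirical characteristic function. -/
def pooledECHF {p n : ℕ} (X : Fin n → EuclideanSpace ℝ (Fin p))
    (t : EuclideanSpace ℝ (Fin p)) : ℂ :=
  (1 / (n : ℂ)) * ∑ i, Complex.exp (Complex.I * ((inner ℝ t (X i) : ℝ) : ℂ))

/-- The constant `C_p = π^((1+p)/2) / Γ((1+p)/2)`. -/
def Cp (p : ℕ) : ℝ := Real.pi ^ (((1 : ℝ) + p) / 2) / Real.Gamma (((1 : ℝ) + p) / 2)

/-- The weight function `ω(t) = 1 / (C_p ‖t‖^(1+p))`. -/
def omegaW (p : ℕ) (t : EuclideanSpace ℝ (Fin p)) : ℝ :=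
  1 / (Cp p * ‖t‖ ^ (1 + p))


/-- Proposition 1 (distance property): the weighted energy distance is nonnegative,
and vanishes exactly when the weighted empirical characteristic function of group `a`
agrees with the pooled empirical characteristic function everywhere. -/
theorem weighted_energy_distance_property (p n : ℕ) (hp : 1 ≤ p) (hn : 1 ≤ n)
    (X : Fin n → EuclideanSpace ℝ (Fin p)) (A : Fin n → Bool) (w : Fin n → ℝ)
    (h0 : 1 ≤ groupCard A false) (h1 : 1 ≤ groupCard A true)
    (hsum : ∀ a : Bool, ∑ i, (if A i = a then w i else 0) = (groupCard A a : ℝ))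
    (hpos : ∀ i, 0 < w i) (a : Bool) :
    0 ≤ energyDist X A w a ∧
      (energyDist X A w a = 0 ↔
        ∀ t : EuclideanSpace ℝ (Fin p), wECHF X A w a t = pooledECHF X t) := by
  classical
  have hna : 1 ≤ groupCard A a := by
    cases a with
    | false => exact h0
    | true => exact h1
  have hnaR : (0:ℝ) < (groupCard A a : ℝ) := by exact_mod_cast hna
  have hnR : (0:ℝ) < (n:ℝ) := by exact_mod_cast hn
  set na : ℝ := (groupCard A a : ℝ) with hnadef
  set α : Fin n → ℝ := fun i => if A i = a then w i else 0 with hα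
  -- the centered coefficients
  set c : Fin n → ℝ := fun i => α i / na - 1 / n with hcdef
  have hc : ∑ i, c i = 0 := by
    have h1 : ∑ i, c i = (∑ i, α i) / na - (n:ℝ) * (1/n) := by
      rw [hcdef]
      rw [Finset.sum_sub_distrib, ← Finset.sum_div]
      congr 1
      rw [Finset.sum_const, Finset.card_univ, Fintype.card_fin, nsmul_eq_mul]
    rw [h1, hα, hsum a, ← hnadef, div_self (ne_of_gt hnaR), mul_one_div,
      div_self (ne_of_gt hnR), sub_self]
  obtain ⟨hnn, hiff⟩ := energy_core hp X c hc
  -- the algebraic identity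
  have hswap : ∑ i, ∑ j, α j * ‖X i - X j‖ = ∑ i, ∑ j, α i * ‖X i - X j‖ := by
    rw [Finset.sum_comm]
    exact Finset.sum_congr rfl fun i _ => Finset.sum_congr rfl fun j _ => by
      rw [norm_sub_rev]
  have hαα : ∀ i j : Fin n, (if A i = a ∧ A j = a then w i * w j else 0) = α i * α j := by
    intro i j
    by_cases hh1 : A i = a <;> by_cases hh2 : A j = a <;> simp [hα, hh1, hh2]
  have hterm : ∀ i j : Fin n, c i * c j * ‖X i - X j‖
      = (1/na^2) * ((α i * α j) * ‖X i - X j‖)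
        - (1/(na*n)) * (α i * ‖X i - X j‖)
        - (1/(na*n)) * (α j * ‖X i - X j‖)
        + (1/(n:ℝ)^2) * ‖X i - X j‖ := by
    intro i j
    rw [hcdef]
    have hna0 : na ≠ 0 := ne_of_gt hnaR
    have hn0 : (n:ℝ) ≠ 0 := ne_of_gt hnR
    field_simp
    ring
  have hexpand : ∑ i, ∑ j, c i * c j * ‖X i - X j‖
      = (1/na^2) * (∑ i, ∑ j, (α i * α j) * ‖X i - X j‖)
        - (2/(na*n)) * (∑ i, ∑ j, α i * ‖X i - X j‖)
        + (1/(n:ℝ)^2) * (∑ i, ∑ j, ‖X i - X j‖) := by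
    calc ∑ i, ∑ j, c i * c j * ‖X i - X j‖
        = ∑ i, ∑ j, ((1/na^2) * ((α i * α j) * ‖X i - X j‖)
            - (1/(na*n)) * (α i * ‖X i - X j‖)
            - (1/(na*n)) * (α j * ‖X i - X j‖)
            + (1/(n:ℝ)^2) * ‖X i - X j‖) :=
          Finset.sum_congr rfl fun i _ => Finset.sum_congr rfl fun j _ => hterm i j
      _ = (1/na^2) * (∑ i, ∑ j, (α i * α j) * ‖X i - X j‖)
            - (1/(na*n)) * (∑ i, ∑ j, α i * ‖X i - X j‖)
            - (1/(na*n)) * (∑ i, ∑ j, α j * ‖X i - X j‖)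
            + (1/(n:ℝ)^2) * (∑ i, ∑ j, ‖X i - X j‖) := by
          simp only [Finset.sum_add_distrib, Finset.sum_sub_distrib, ← Finset.mul_sum]
      _ = _ := by rw [hswap]; ring
  have halg : energyDist X A w a = -∑ i, ∑ j, c i * c j * ‖X i - X j‖ := by
    rw [hexpand, energyDist]
    have hS2 : ∑ i, ∑ j, (if A i = a ∧ A j = a then w i * w j else 0) * ‖X i - X j‖
        = ∑ i, ∑ j, (α i * α j) * ‖X i - X j‖ :=
      Finset.sum_congr rfl fun i _ => Finset.sum_congr rfl fun j _ => by rw [hαα i j]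
    have hS1 : ∑ i, ∑ j, (if A i = a then w i else 0) * ‖X i - X j‖
        = ∑ i, ∑ j, α i * ‖X i - X j‖ := by rw [hα]
    rw [hS2, hS1, ← hnadef]
    ring
  -- characteristic function difference
  have hchar_iff : ∀ t : EuclideanSpace ℝ (Fin p),
      (wECHF X A w a t = pooledECHF X t ↔
        ∑ i, (c i : ℂ) * Complex.exp (Complex.I * ((inner ℝ t (X i) : ℝ) : ℂ)) = 0) := by
    intro t
    have hdiff : ∑ i, (c i : ℂ) * Complex.exp (Complex.I * ((inner ℝ t (X i) : ℝ) : ℂ))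
        = wECHF X A w a t - pooledECHF X t := by
      rw [wECHF, pooledECHF, Finset.mul_sum, Finset.mul_sum, ← Finset.sum_sub_distrib]
      refine Finset.sum_congr rfl fun i _ => ?_
      have hcast : ((c i : ℝ) : ℂ)
          = (if A i = a then (w i : ℂ) else 0) / (na:ℂ) - 1/(n:ℂ) := by
        rw [hcdef]
        have : ((α i : ℝ) : ℂ) = (if A i = a then (w i : ℂ) else 0) := by
          rw [hα]
          simp only [apply_ite (fun x : ℝ => (x : ℂ)), Complex.ofReal_zero]
        push_cast
        rw [this]
      rw [hcast]
      have hnaC : ((na:ℝ):ℂ) = ((groupCard A a : ℕ) : ℂ) := by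
        rw [hnadef]; push_cast; ring
      rw [← hnaC]
      ring
    constructor
    · intro h
      rw [hdiff, h, sub_self]
    · intro h
      rw [hdiff] at h
      exact sub_eq_zero.mp h
  constructor
  · rw [halg]
    exact hnn
  · rw [halg]
    constructor
    · intro h0 t
      have hsz : ∑ i, ∑ j, c i * c j * ‖X i - X j‖ = 0 := by linarith
      exact (hchar_iff t).mpr (hiff.mp hsz t)
    · intro hech
      rw [hiff.mpr (fun t => (hchar_iff t).mp (hech t)), neg_zero]

end
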